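/- Let f, g be real polynomials with deg g = n, deg f ≤ n, and let h = f/g. Suppose λ ∈ ℝ is such that f - λg has n simple roots, none of which is a root of g. Then the signature of the symmetric Bezout matrix B(f,g) equals r₊ - r₋, where r₊ (resp. r₋) is the number of real roots q of f - λg with h'(q) > 0 (resp. h'(q) < 0). -/

import Mathlib

open Polynomial

noncomputable def bezoutMatrixR (n : ℕ) (f g : Polynomial ℝ) : Matrix (Fin n) (Fin n) ℝ :=
  fun i j =>
    (((f.map C * C g - C f * g.map C) /ₘ (X - C X)).coeff i).coeff j

section Aux
open Matrix

lemma mulVec_sum' {n : ℕ} {ι : Type*} (s : Finset ι) (A : Matrix (Fin n) (Fin n) ℝ)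
    (v : ι → Fin n → ℝ) : A *ᵥ (∑ i ∈ s, v i) = ∑ i ∈ s, A *ᵥ v i := by
  induction s using Finset.cons_induction with
  | empty => simp
  | cons a s ha ih => rw [Finset.sum_cons, Finset.sum_cons, Matrix.mulVec_add, ih]

lemma posCard_le {n : ℕ} (d e : Fin n → ℝ) (A : Matrix (Fin n) (Fin n) ℝ)
    (h : Matrix.diagonal d = Aᵀ * Matrix.diagonal e * A) :
    Fintype.card {i : Fin n // 0 < d i} ≤ Fintype.card {i : Fin n // 0 < e i} := by
  classical
  set F : {i : Fin n // 0 < d i} ⊕ {j : Fin n // ¬ 0 < e j} → (Fin n → ℝ) :=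
    Sum.elim (fun i => A.mulVec (Pi.single i.1 1)) (fun j => Pi.single j.1 1) with hF
  have hind : LinearIndependent ℝ F := by
    rw [Fintype.linearIndependent_iff]
    intro g hg
    -- define x and y
    set x : Fin n → ℝ := fun k => if h : 0 < d k then g (Sum.inl ⟨k, h⟩) else 0 with hxdef
    set y : Fin n → ℝ := fun k => if h : ¬ 0 < e k then g (Sum.inr ⟨k, h⟩) else 0 with hydef
    have hxsum : (∑ i : {i : Fin n // 0 < d i}, g (Sum.inl i) • Pi.single (M := fun _ => (ℝ:Type)) i.1 1) = x := by
      funext m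
      rw [Finset.sum_apply]
      by_cases hm : 0 < d m
      · rw [hxdef]
        simp only [hm, dif_pos]
        rw [Finset.sum_eq_single_of_mem ⟨m, hm⟩ (Finset.mem_univ _)]
        · simp
        · intro b _ hb
          have : (b : Fin n) ≠ m := fun hbm => hb (Subtype.ext hbm)
          simp [Pi.single_apply, this]
      · rw [hxdef]
        simp only [hm, dif_neg, not_false_iff]
        apply Finset.sum_eq_zero
        intro b _
        have : (b : Fin n) ≠ m := fun hbm => hm (hbm ▸ b.2)
        simp [Pi.single_apply, this]
    have hysum : (∑ j : {j : Fin n // ¬ 0 < e j}, g (Sum.inr j) • Pi.single (M := fun _ => (ℝ:Type)) j.1 1) = y := by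
      funext m
      rw [Finset.sum_apply]
      by_cases hm : ¬ 0 < e m
      · rw [hydef]
        simp only [hm, dif_pos, not_false_iff]
        rw [Finset.sum_eq_single_of_mem ⟨m, hm⟩ (Finset.mem_univ _)]
        · simp
        · intro b _ hb
          have : (b : Fin n) ≠ m := fun hbm => hb (Subtype.ext hbm)
          simp [Pi.single_apply, this]
      · rw [hydef]
        simp only [hm, dif_neg, not_false_iff]
        apply Finset.sum_eq_zero
        intro b _
        have : (b : Fin n) ≠ m := fun hbm => hm (hbm ▸ b.2)
        simp [Pi.single_apply, this]
    have hAxy : A.mulVec x + y = 0 := by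
      have := hg
      rw [Fintype.sum_sum_type] at this
      have h1 : (∑ i : {i : Fin n // 0 < d i}, g (Sum.inl i) • F (Sum.inl i)) = A.mulVec x := by
        rw [hF]
        simp only [Sum.elim_inl]
        conv_rhs => rw [← hxsum]
        rw [mulVec_sum']
        apply Finset.sum_congr rfl
        intro i _
        rw [Matrix.mulVec_smul]
      have h2 : (∑ j : {j : Fin n // ¬ 0 < e j}, g (Sum.inr j) • F (Sum.inr j)) = y := by
        rw [hF]; simpa using hysum
      rw [h1, h2] at this
      exact this
    -- quadratic form values
    have hQ : ∑ k, d k * x k ^ 2 = ∑ k, e k * (A.mulVec x k) ^ 2 := by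
      have hq1 : x ⬝ᵥ (Matrix.diagonal d *ᵥ x) = ∑ k, d k * x k ^ 2 := by
        simp [dotProduct, Matrix.mulVec_diagonal]
        apply Finset.sum_congr rfl; intro k _; ring
      have hq2 : x ⬝ᵥ ((Aᵀ * Matrix.diagonal e * A) *ᵥ x)
          = (A.mulVec x) ⬝ᵥ (Matrix.diagonal e *ᵥ (A.mulVec x)) := by
        rw [← Matrix.mulVec_mulVec, ← Matrix.mulVec_mulVec]
        rw [Matrix.dotProduct_mulVec, Matrix.vecMul_transpose]
      have hq3 : (A.mulVec x) ⬝ᵥ (Matrix.diagonal e *ᵥ (A.mulVec x)) = ∑ k, e k * (A.mulVec x k) ^ 2 := by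
        simp [dotProduct, Matrix.mulVec_diagonal]
        apply Finset.sum_congr rfl; intro k _; ring
      rw [← hq1, h, hq2, hq3]
    have hAx : A.mulVec x = -y := by
      rw [eq_neg_iff_add_eq_zero]; exact hAxy
    have hle : ∑ k, e k * (A.mulVec x k) ^ 2 ≤ 0 := by
      apply Finset.sum_nonpos
      intro k _
      by_cases hk : 0 < e k
      · have : A.mulVec x k = 0 := by
          rw [hAx]; simp [hydef, hk]
        simp [this]
      · have he : e k ≤ 0 := le_of_not_gt hk
        have : (A.mulVec x k) ^ 2 ≥ 0 := sq_nonneg _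
        exact mul_nonpos_of_nonpos_of_nonneg he this
    have hge : ∀ k ∈ Finset.univ, 0 ≤ d k * x k ^ 2 := by
      intro k _
      by_cases hk : 0 < d k
      · positivity
      · have : x k = 0 := by simp [hxdef, hk]
        simp [this]
    have hzero : ∑ k, d k * x k ^ 2 = 0 :=
      le_antisymm (hQ ▸ hle) (Finset.sum_nonneg hge)
    have hxzero : ∀ k, x k = 0 := by
      intro k
      by_cases hk : 0 < d k
      · have := (Finset.sum_eq_zero_iff_of_nonneg hge).mp hzero k (Finset.mem_univ k)
        have h2 : x k ^ 2 = 0 := by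
          by_contra hne
          exact hne (by
            have := mul_eq_zero.mp this
            rcases this with h | h
            · exact absurd h (ne_of_gt hk)
            · exact h)
        exact pow_eq_zero_iff (by norm_num) |>.mp h2
      · simp [hxdef, hk]
    have hyzero : ∀ k, y k = 0 := by
      intro k
      have : y = -(A.mulVec x) := by rw [hAx]; simp
      rw [this]
      have : x = 0 := funext hxzero
      simp [this]
    intro i
    rcases i with i | j
    · have := hxzero i.1
      rw [hxdef] at this
      simpa [i.2] using this
    · have := hyzero j.1
      rw [hydef] at this
      simpa [j.2] using this
  have hcard := hind.fintype_card_le_finrank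
  rw [Module.finrank_pi] at hcard
  simp only [Fintype.card_sum, Fintype.card_fin] at hcard
  have hcompl : Fintype.card {j : Fin n // ¬ 0 < e j}
      = n - Fintype.card {j : Fin n // 0 < e j} := by
    have := Fintype.card_subtype_compl (fun j : Fin n => 0 < e j)
    simpa using this
  have hle2 : Fintype.card {j : Fin n // 0 < e j} ≤ n := by
    have := Fintype.card_subtype_le (fun j : Fin n => 0 < e j)
    simpa using this
  omega

end Aux

section Aux2
open Matrix


lemma inertia_pos_eq {n : ℕ} (d e : Fin n → ℝ) (A : Matrix (Fin n) (Fin n) ℝ)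
    (hA : IsUnit A.det) (h : Matrix.diagonal d = Aᵀ * Matrix.diagonal e * A) :
    Fintype.card {i : Fin n // 0 < d i} = Fintype.card {i : Fin n // 0 < e i} := by
  refine le_antisymm (posCard_le d e A h) (posCard_le e d A⁻¹ ?_)
  have h1 : A * A⁻¹ = 1 := Matrix.mul_nonsing_inv A hA
  have h2 : A⁻¹ * A = 1 := Matrix.nonsing_inv_mul A hA
  calc Matrix.diagonal e = (A * A⁻¹)ᵀ * Matrix.diagonal e * (A * A⁻¹) := by
        rw [h1]; simp
    _ = A⁻¹ᵀ * (Aᵀ * Matrix.diagonal e * A) * A⁻¹ := by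
        rw [Matrix.transpose_mul]; simp only [Matrix.mul_assoc]
    _ = A⁻¹ᵀ * Matrix.diagonal d * A⁻¹ := by rw [← h]

lemma inertia_neg_eq {n : ℕ} (d e : Fin n → ℝ) (A : Matrix (Fin n) (Fin n) ℝ)
    (hA : IsUnit A.det) (h : Matrix.diagonal d = Aᵀ * Matrix.diagonal e * A) :
    Fintype.card {i : Fin n // d i < 0} = Fintype.card {i : Fin n // e i < 0} := by
  have h' : Matrix.diagonal (fun i => -d i) = Aᵀ * Matrix.diagonal (fun i => -e i) * A := by
    have h1 : Matrix.diagonal (fun i => -d i) = -Matrix.diagonal d := by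
      rw [← Matrix.diagonal_neg]
    have h2 : Matrix.diagonal (fun i => -e i) = -Matrix.diagonal e := by
      rw [← Matrix.diagonal_neg]
    rw [h1, h2, h, Matrix.mul_neg, Matrix.neg_mul]
  have := inertia_pos_eq _ _ A hA h'
  have e1 : Fintype.card {i : Fin n // 0 < -d i} = Fintype.card {i : Fin n // d i < 0} :=
    Fintype.card_congr (Equiv.subtypeEquivRight fun i => neg_pos)
  have e2 : Fintype.card {i : Fin n // 0 < -e i} = Fintype.card {i : Fin n // e i < 0} :=
    Fintype.card_congr (Equiv.subtypeEquivRight fun i => neg_pos)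
  rw [← e1, ← e2]
  exact this

lemma sig_eq {n : ℕ} (B : Matrix (Fin n) (Fin n) ℝ) (hH : B.IsHermitian)
    (d : Fin n → ℝ) (V : Matrix (Fin n) (Fin n) ℝ) (hV : IsUnit V.det)
    (hD : V * B * Vᵀ = Matrix.diagonal d) :
    Fintype.card {i : Fin n // 0 < hH.eigenvalues i} = Fintype.card {i : Fin n // 0 < d i} ∧
    Fintype.card {i : Fin n // hH.eigenvalues i < 0} = Fintype.card {i : Fin n // d i < 0} := by
  set U : Matrix (Fin n) (Fin n) ℝ := (hH.eigenvectorUnitary : Matrix (Fin n) (Fin n) ℝ) with hU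
  have hspec : Uᵀ * B * U = Matrix.diagonal hH.eigenvalues := by
    have := hH.conjStarAlgAut_star_eigenvectorUnitary
    simpa [Unitary.conjStarAlgAut_star_apply, Matrix.star_eq_conjTranspose,
      Matrix.conjTranspose_eq_transpose_of_trivial] using this
  have hstar : star U = Uᵀ := by
    rw [Matrix.star_eq_conjTranspose, hU]
    rfl
  have hU1 : Uᵀ * U = 1 := by
    rw [← hstar]
    exact (Matrix.mem_unitaryGroup_iff').mp hH.eigenvectorUnitary.2
  have hU2 : U * Uᵀ = 1 := by
    rw [← hstar]
    exact (Matrix.mem_unitaryGroup_iff).mp hH.eigenvectorUnitary.2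
  have hB : B = U * Matrix.diagonal hH.eigenvalues * Uᵀ := by
    rw [← hspec]
    calc B = (U * Uᵀ) * B * (U * Uᵀ) := by rw [hU2]; simp
      _ = U * (Uᵀ * B * U) * Uᵀ := by
        simp only [Matrix.mul_assoc]
  have key : Matrix.diagonal d = ((V * U)ᵀ)ᵀ * Matrix.diagonal hH.eigenvalues * (V * U)ᵀ := by
    calc Matrix.diagonal d = V * B * Vᵀ := hD.symm
      _ = V * (U * Matrix.diagonal hH.eigenvalues * Uᵀ) * Vᵀ := by rw [← hB]
      _ = (V * U) * Matrix.diagonal hH.eigenvalues * (Uᵀ * Vᵀ) := by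
          simp only [Matrix.mul_assoc]
      _ = ((V * U)ᵀ)ᵀ * Matrix.diagonal hH.eigenvalues * (V * U)ᵀ := by
          rw [Matrix.transpose_transpose, Matrix.transpose_mul]
  have hdetU : IsUnit U.det := by
    apply IsUnit.of_mul_eq_one Uᵀ.det
    rw [← Matrix.det_mul, hU2, Matrix.det_one]
  have hdetA : IsUnit ((V * U)ᵀ).det := by
    rw [Matrix.det_transpose, Matrix.det_mul]
    exact hV.mul hdetU
  constructor
  · exact (inertia_pos_eq _ _ _ hdetA key).symm
  · exact (inertia_neg_eq _ _ _ hdetA key).symm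

noncomputable def bezN (f g : Polynomial ℝ) : Polynomial (Polynomial ℝ) :=
  f.map C * C g - C f * g.map C

noncomputable def bezP (f g : Polynomial ℝ) : Polynomial (Polynomial ℝ) :=
  bezN f g /ₘ (X - C X)

lemma bezN_eval_self (f g : Polynomial ℝ) : (bezN f g).eval (X : Polynomial ℝ) = 0 := by
  simp [bezN, eval_map, eval₂_C_X, mul_comm]

lemma bez_key (f g : Polynomial ℝ) : (X - C (X : Polynomial ℝ)) * bezP f g = bezN f g := by
  have h := modByMonic_add_div (bezN f g) (X - C (X : Polynomial ℝ))
  rw [modByMonic_X_sub_C_eq_C_eval, bezN_eval_self, map_zero, zero_add] at h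
  exact h

-- evaluation ψ a b
noncomputable def bezEv (a b : ℝ) (q : Polynomial (Polynomial ℝ)) : ℝ :=
  (q.eval (C a)).eval b

lemma bezEv_mul (a b : ℝ) (q r : Polynomial (Polynomial ℝ)) :
    bezEv a b (q * r) = bezEv a b q * bezEv a b r := by simp [bezEv]

lemma bezEv_sub (a b : ℝ) (q r : Polynomial (Polynomial ℝ)) :
    bezEv a b (q - r) = bezEv a b q - bezEv a b r := by simp [bezEv]

lemma bezEv_map (a b : ℝ) (f : Polynomial ℝ) : bezEv a b (f.map C) = f.eval a := by
  simp only [bezEv, eval_map]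
  have h0 : eval b (eval₂ C (C a) f) = (evalRingHom b) (eval₂ C (C a) f) := rfl
  rw [h0, hom_eval₂]
  have h1 : (evalRingHom b).comp (C : ℝ →+* Polynomial ℝ) = RingHom.id ℝ := by
    ext r; simp
  rw [h1]
  have h2 : (evalRingHom b) (C a) = a := by simp
  rw [h2]
  rfl

lemma bezEv_C (a b : ℝ) (f : Polynomial ℝ) : bezEv a b (C f) = f.eval b := by
  simp [bezEv]

lemma bezEv_N (a b : ℝ) (f g : Polynomial ℝ) :
    bezEv a b (bezN f g) = f.eval a * g.eval b - f.eval b * g.eval a := by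
  rw [bezN, bezEv_sub, bezEv_mul, bezEv_mul, bezEv_map, bezEv_C, bezEv_C, bezEv_map]

lemma bezEv_XsubC (a b : ℝ) : bezEv a b (X - C (X : Polynomial ℝ)) = a - b := by
  simp [bezEv]

lemma bezEv_add (a b : ℝ) (q r : Polynomial (Polynomial ℝ)) :
    bezEv a b (q + r) = bezEv a b q + bezEv a b r := by simp [bezEv]

noncomputable def bezTau : Polynomial (Polynomial ℝ) →+* Polynomial (Polynomial ℝ) :=
  eval₂RingHom (mapRingHom (C : ℝ →+* Polynomial ℝ)) (C X)

lemma bezTau_coeff (q : Polynomial (Polynomial ℝ)) (k l : ℕ) :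
    ((bezTau q).coeff k).coeff l = (q.coeff l).coeff k := by
  induction q using Polynomial.induction_on' with
  | add p r hp hr => simp [map_add, coeff_add, hp, hr]
  | monomial i a =>
      rw [show (bezTau (monomial i a) : Polynomial (Polynomial ℝ))
          = (a.map C) * (C X) ^ i by
        simp [bezTau, coe_eval₂RingHom, eval₂_monomial]]
      rw [← C_pow, coeff_mul_C, coeff_map, coeff_C_mul, coeff_X_pow, coeff_monomial]
      by_cases h : l = i
      · subst h; simp
      · rw [if_neg h, if_neg (fun hh => h hh.symm), mul_zero, coeff_zero]

lemma bezTau_mapC (f : Polynomial ℝ) : bezTau (f.map C) = C f := by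
  show eval₂ (mapRingHom (C : ℝ →+* Polynomial ℝ)) (C X) (f.map C) = C f
  rw [eval₂_map]
  have h1 : (mapRingHom (C : ℝ →+* Polynomial ℝ)).comp C
      = (C : Polynomial ℝ →+* Polynomial (Polynomial ℝ)).comp C := by
    ext r
    simp
  rw [h1]
  have h2 : (C (f : Polynomial ℝ) : Polynomial (Polynomial ℝ))
      = (C : Polynomial ℝ →+* Polynomial (Polynomial ℝ)) (eval₂ C X f) := by
    rw [eval₂_C_X]
  rw [h2, hom_eval₂]

lemma bezTau_C (f : Polynomial ℝ) : bezTau (C f) = f.map C := by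
  show eval₂ (mapRingHom (C : ℝ →+* Polynomial ℝ)) (C X) (C f) = f.map C
  rw [eval₂_C]
  rfl

lemma bezTau_N (f g : Polynomial ℝ) : bezTau (bezN f g) = -(bezN f g) := by
  rw [bezN, map_sub, _root_.map_mul, _root_.map_mul, bezTau_mapC, bezTau_C, bezTau_mapC, bezTau_C]
  ring

lemma bezTau_XsubC : bezTau (X - C (X : Polynomial ℝ)) = -(X - C (X : Polynomial ℝ)) := by
  rw [map_sub, bezTau_C]
  show eval₂ (mapRingHom (C : ℝ →+* Polynomial ℝ)) (C X) X - _ = _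
  rw [eval₂_X, map_X]
  ring

lemma bezTau_P (f g : Polynomial ℝ) : bezTau (bezP f g) = bezP f g := by
  have h := congrArg bezTau (bez_key f g)
  rw [_root_.map_mul, bezTau_XsubC, bezTau_N, ← bez_key f g] at h
  have hne : (X - C (X : Polynomial ℝ)) ≠ 0 := X_sub_C_ne_zero X
  have h2 : -(X - C (X : Polynomial ℝ)) * bezTau (bezP f g)
      = -(X - C (X : Polynomial ℝ)) * bezP f g := by
    rw [h]
    ring
  exact mul_left_cancel₀ (neg_ne_zero.mpr hne) h2

lemma bezN_natDegree_le {n : ℕ} (f g : Polynomial ℝ) (hf : f.natDegree ≤ n)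
    (hg : g.natDegree ≤ n) : (bezN f g).natDegree ≤ n := by
  apply le_trans (natDegree_sub_le _ _)
  apply max_le
  · calc (f.map C * C g).natDegree ≤ (f.map C).natDegree + (C g).natDegree := natDegree_mul_le
      _ ≤ f.natDegree + 0 := add_le_add natDegree_map_le (le_of_eq (natDegree_C _))
      _ ≤ n := by simpa using hf
  · calc (C f * g.map C).natDegree ≤ (C f).natDegree + (g.map C).natDegree := natDegree_mul_le
      _ ≤ 0 + g.natDegree := add_le_add (le_of_eq (natDegree_C _)) natDegree_map_le
      _ ≤ n := by simpa using hg

lemma bezP_natDegree_lt {n : ℕ} (hn : 0 < n) (f g : Polynomial ℝ) (hf : f.natDegree ≤ n)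
    (hg : g.natDegree ≤ n) : (bezP f g).natDegree < n := by
  rw [bezP, natDegree_divByMonic _ (monic_X_sub_C (X : Polynomial ℝ))]
  have := bezN_natDegree_le f g hf hg
  rw [natDegree_X_sub_C]
  omega

lemma bezP_coeff_outer {n : ℕ} (hn : 0 < n) (f g : Polynomial ℝ) (hf : f.natDegree ≤ n)
    (hg : g.natDegree ≤ n) {k : ℕ} (hk : n ≤ k) : (bezP f g).coeff k = 0 :=
  coeff_eq_zero_of_natDegree_lt (lt_of_lt_of_le (bezP_natDegree_lt hn f g hf hg) hk)

lemma bezP_coeff_inner {n : ℕ} (hn : 0 < n) (f g : Polynomial ℝ) (hf : f.natDegree ≤ n)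
    (hg : g.natDegree ≤ n) {k l : ℕ} (hl : n ≤ l) : ((bezP f g).coeff k).coeff l = 0 := by
  have := bezTau_coeff (bezP f g) k l
  rw [bezTau_P] at this
  rw [this, bezP_coeff_outer hn f g hf hg hl, coeff_zero]

lemma natDegree_lt_of_coeff {n : ℕ} (r : Polynomial ℝ) (hn : 0 < n)
    (h : ∀ l, n ≤ l → r.coeff l = 0) : r.natDegree < n := by
  by_contra h'
  push_neg at h'
  rcases eq_or_ne r 0 with rfl | h0
  · simp at h'; omega
  · exact (leadingCoeff_ne_zero.mpr h0) (h _ h')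

lemma bezEv_expand {n : ℕ} (hn : 0 < n) (f g : Polynomial ℝ) (hf : f.natDegree ≤ n)
    (hg : g.natDegree ≤ n) (a b : ℝ) :
    bezEv a b (bezP f g)
      = ∑ k : Fin n, ∑ l : Fin n,
          ((bezP f g).coeff (k : ℕ)).coeff (l : ℕ) * a ^ (k : ℕ) * b ^ (l : ℕ) := by
  rw [bezEv]
  rw [eval_eq_sum_range' (bezP_natDegree_lt hn f g hf hg) (C a)]
  rw [eval_finset_sum]
  rw [Fin.sum_univ_eq_sum_range
    (fun k => ∑ l : Fin n, ((bezP f g).coeff k).coeff (l : ℕ) * a ^ k * b ^ (l : ℕ))]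
  apply Finset.sum_congr rfl
  intro k _
  rw [← C_pow, eval_mul, eval_C]
  have hdeg : ((bezP f g).coeff k).natDegree < n :=
    natDegree_lt_of_coeff _ hn (fun l hl => bezP_coeff_inner hn f g hf hg hl)
  rw [eval_eq_sum_range' hdeg b]
  rw [Finset.sum_mul]
  rw [Fin.sum_univ_eq_sum_range
    (fun l => ((bezP f g).coeff k).coeff l * a ^ k * b ^ l)]
  apply Finset.sum_congr rfl
  intro l _
  ring

lemma bezEv_offdiag (f g : Polynomial ℝ) (a b : ℝ) :
    (a - b) * bezEv a b (bezP f g) = f.eval a * g.eval b - f.eval b * g.eval a := by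
  have h := congrArg (bezEv a b) (bez_key f g)
  rw [bezEv_mul, bezEv_XsubC, bezEv_N] at h
  exact h

lemma bezEv_diag (f g : Polynomial ℝ) (a : ℝ) :
    bezEv a a (bezP f g)
      = (derivative f).eval a * g.eval a - f.eval a * (derivative g).eval a := by
  have h := congrArg derivative (bez_key f g)
  rw [derivative_mul] at h
  have h1 : derivative (X - C (X : Polynomial ℝ)) = 1 := by simp
  rw [h1, one_mul] at h
  have h2 := congrArg (bezEv a a) h
  rw [bezEv_add, bezEv_mul, bezEv_XsubC, sub_self, zero_mul, add_zero] at h2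
  rw [h2, bezN]
  have hd : derivative (f.map C * C g - C f * g.map C)
      = (derivative f).map C * C g - C f * (derivative g).map C := by
    rw [derivative_sub, derivative_mul, derivative_mul, derivative_map, derivative_map]
    simp
  rw [hd, bezEv_sub, bezEv_mul, bezEv_mul, bezEv_map, bezEv_C, bezEv_C, bezEv_map]

end Aux2

open Matrix in
/-- If `λ ∈ ℝ` is such that `f - λg` has `n` simple (real) roots, none a root of `g`,
then the signature of `B(f,g)` is `r₊ - r₋`, where `r₊` (resp. `r₋`) counts the real
roots `q` of `f - λg` with `h'(q) > 0` (resp. `< 0`), `h' = (f'g - fg')/g²`. -/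
theorem bezout_signature_fiber (n : ℕ) (f g : Polynomial ℝ) (lam : ℝ)
    (hg : g.natDegree = n) (hf : f.natDegree ≤ n)
    (hcard : Multiset.card (f - C lam * g).roots = n)
    (hsimple : (f - C lam * g).roots.Nodup)
    (hnotg : ∀ q ∈ (f - C lam * g).roots, g.eval q ≠ 0)
    (hH : (bezoutMatrixR n f g).IsHermitian) :
    (Fintype.card {i : Fin n // 0 < hH.eigenvalues i} : ℤ)
        - Fintype.card {i : Fin n // hH.eigenvalues i < 0}
      = (((f - C lam * g).roots.toFinset.filter
            (fun q => 0 < (f.derivative.eval q * g.eval q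
                - f.eval q * g.derivative.eval q) / (g.eval q) ^ 2)).card : ℤ)
        - ((f - C lam * g).roots.toFinset.filter
            (fun q => (f.derivative.eval q * g.eval q
                - f.eval q * g.derivative.eval q) / (g.eval q) ^ 2 < 0)).card := by
  classical
  set p : Polynomial ℝ := f - C lam * g with hp
  rcases Nat.eq_zero_or_pos n with hn | hn
  · subst hn
    have h1 : Fintype.card {i : Fin 0 // 0 < hH.eigenvalues i} = 0 := Fintype.card_eq_zero
    have h2 : Fintype.card {i : Fin 0 // hH.eigenvalues i < 0} = 0 := Fintype.card_eq_zero
    have h3 : p.roots = 0 := Multiset.card_eq_zero.mp hcard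
    rw [h1, h2, h3]
    simp
  -- main case
  have hp0 : p ≠ 0 := by
    intro h0
    rw [h0] at hcard
    simp at hcard
    omega
  have hgn : g.natDegree ≤ n := le_of_eq hg
  have htf : p.roots.toFinset.card = n := by
    rw [Multiset.toFinset_card_of_nodup hsimple, hcard]
  set σ : Fin n ≃ {x // x ∈ p.roots.toFinset} := (p.roots.toFinset.equivFinOfCardEq htf).symm
    with hσ
  set q : Fin n → ℝ := fun i => (σ i : ℝ) with hq
  have hqmem : ∀ i, q i ∈ p.roots := fun i => by
    have := (σ i).2
    rwa [Multiset.mem_toFinset] at this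
  have hqroot : ∀ i, p.eval (q i) = 0 := fun i => (isRoot_of_mem_roots (hqmem i))
  have hqinj : Function.Injective q := by
    intro i j hij
    exact σ.injective (Subtype.ext hij)
  have hgq : ∀ i, g.eval (q i) ≠ 0 := fun i => hnotg _ (hqmem i)
  have hfq : ∀ i, f.eval (q i) = lam * g.eval (q i) := by
    intro i
    have := hqroot i
    rw [hp] at this
    simp only [eval_sub, eval_mul, eval_C] at this
    linarith
  set B : Matrix (Fin n) (Fin n) ℝ := bezoutMatrixR n f g with hB
  have hBcoeff : ∀ k l : Fin n, B k l = ((bezP f g).coeff (k : ℕ)).coeff (l : ℕ) :=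
    fun k l => rfl
  set V : Matrix (Fin n) (Fin n) ℝ := Matrix.vandermonde q with hV
  have hdet : IsUnit V.det := by
    rw [isUnit_iff_ne_zero, hV]
    exact Matrix.det_vandermonde_ne_zero_iff.mpr hqinj
  set d' : Fin n → ℝ := fun i =>
    (derivative f).eval (q i) * g.eval (q i) - f.eval (q i) * (derivative g).eval (q i)
    with hd'
  have hmain : ∀ i j, (V * B * Vᵀ) i j = bezEv (q i) (q j) (bezP f g) := by
    intro i j
    rw [bezEv_expand hn f g hf hgn]
    simp only [Matrix.mul_apply, Matrix.transpose_apply, Finset.sum_mul]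
    rw [Finset.sum_comm]
    apply Finset.sum_congr rfl
    intro k _
    apply Finset.sum_congr rfl
    intro l _
    rw [hBcoeff k l]
    simp only [hV, Matrix.vandermonde_apply]
    ring
  have hVBV : V * B * Vᵀ = Matrix.diagonal d' := by
    ext i j
    rcases eq_or_ne i j with rfl | hij
    · rw [hmain i i, Matrix.diagonal_apply_eq, bezEv_diag, hd']
    · rw [hmain i j, Matrix.diagonal_apply_ne _ hij]
      have hne : q i - q j ≠ 0 := sub_ne_zero.mpr (fun h => hij (hqinj h))
      have h0 : (q i - q j) * bezEv (q i) (q j) (bezP f g) = 0 := by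
        rw [bezEv_offdiag, hfq i, hfq j]
        ring
      exact (mul_eq_zero.mp h0).resolve_left hne
  obtain ⟨hpos, hneg⟩ := sig_eq B hH d' V hdet hVBV
  rw [hpos, hneg]
  -- translate counts
  have hposcard : Fintype.card {i : Fin n // 0 < d' i}
      = (p.roots.toFinset.filter
          (fun x => 0 < (f.derivative.eval x * g.eval x
              - f.eval x * g.derivative.eval x) / (g.eval x) ^ 2)).card := by
    rw [Fintype.card_subtype]
    apply Finset.card_bij (fun i _ => q i)
    · intro i hi
      rw [Finset.mem_filter] at hi ⊢
      refine ⟨Multiset.mem_toFinset.mpr (hqmem i), ?_⟩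
      have hgb := hgq i
      have hgp : (0:ℝ) < (g.eval (q i)) ^ 2 := by positivity
      rw [lt_div_iff₀ hgp, zero_mul]
      exact hi.2
    · intro i hi j hj hij
      exact hqinj hij
    · intro b hb
      rw [Finset.mem_filter] at hb
      refine ⟨σ.symm ⟨b, hb.1⟩, ?_, ?_⟩
      · rw [Finset.mem_filter]
        refine ⟨Finset.mem_univ _, ?_⟩
        have hqb : q (σ.symm ⟨b, hb.1⟩) = b := by
          rw [hq]
          simp
        rw [hd']
        simp only [hqb]
        have hgb : g.eval b ≠ 0 := by
          apply hnotg
          rw [← Multiset.mem_toFinset]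
          exact hb.1
        have hgp : (0:ℝ) < (g.eval b) ^ 2 := by positivity
        have := hb.2
        rwa [lt_div_iff₀ hgp, zero_mul] at this
      · rw [hq]
        simp
  have hnegcard : Fintype.card {i : Fin n // d' i < 0}
      = (p.roots.toFinset.filter
          (fun x => (f.derivative.eval x * g.eval x
              - f.eval x * g.derivative.eval x) / (g.eval x) ^ 2 < 0)).card := by
    rw [Fintype.card_subtype]
    apply Finset.card_bij (fun i _ => q i)
    · intro i hi
      rw [Finset.mem_filter] at hi ⊢
      refine ⟨Multiset.mem_toFinset.mpr (hqmem i), ?_⟩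
      have hgb := hgq i
      have hgp : (0:ℝ) < (g.eval (q i)) ^ 2 := by positivity
      rw [div_lt_iff₀ hgp, zero_mul]
      exact hi.2
    · intro i hi j hj hij
      exact hqinj hij
    · intro b hb
      rw [Finset.mem_filter] at hb
      refine ⟨σ.symm ⟨b, hb.1⟩, ?_, ?_⟩
      · rw [Finset.mem_filter]
        refine ⟨Finset.mem_univ _, ?_⟩
        have hqb : q (σ.symm ⟨b, hb.1⟩) = b := by
          rw [hq]
          simp
        rw [hd']
        simp only [hqb]
        have hgb : g.eval b ≠ 0 := by
          apply hnotg
          rw [← Multiset.mem_toFinset]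
          exact hb.1
        have hgp : (0:ℝ) < (g.eval b) ^ 2 := by positivity
        have := hb.2
        rwa [div_lt_iff₀ hgp, zero_mul] at this
      · rw [hq]
        simp
  rw [hposcard, hnegcard]
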